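/- Every necklace with at least 3 paths (i.e. every necklace that is not a cycle) is of class 1^±: χ'(G, σ) = Δ(G) for every signature σ. -/

import Mathlib

open SimpleGraph

namespace Signed

variable {V : Type*}

/-- The color set `M n`. -/
def colorSet (n : ℕ) : Set ℤ :=
  {m : ℤ | 2 * m.natAbs ≤ n ∧ (Even n → m ≠ 0)}

/-- `f` is an `n`-edge-coloring of the signed graph `(G, σ)`. -/
def IsEdgeColoring (G : SimpleGraph V) (σ : Sym2 V → ℤ) (n : ℕ)
    (f : V → Sym2 V → ℤ) : Prop :=
  (∀ u v, G.Adj u v → f u s(u, v) ∈ colorSet n) ∧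
  (∀ u v, G.Adj u v → f u s(u, v) = - σ s(u, v) * f v s(u, v)) ∧
  (∀ u v w, G.Adj u v → G.Adj u w → v ≠ w → f u s(u, v) ≠ f u s(u, w))

/-- `(G, σ)` admits an `n`-edge-coloring. -/
def Colorable (G : SimpleGraph V) (σ : Sym2 V → ℤ) (n : ℕ) : Prop :=
  ∃ f, IsEdgeColoring G σ n f

/-- The signed chromatic index. -/
noncomputable def chromIndex (G : SimpleGraph V) (σ : Sym2 V → ℤ) : ℕ :=
  sInf {n | Colorable G σ n}

/-- `σ` is a signature on `G`: it takes values `±1` on edges. -/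
def IsSignature (G : SimpleGraph V) (σ : Sym2 V → ℤ) : Prop :=
  ∀ e ∈ G.edgeSet, σ e = 1 ∨ σ e = -1

/-- Maximum degree (classical decidability). -/
noncomputable def maxDeg [Fintype V] (G : SimpleGraph V) : ℕ :=
  @SimpleGraph.maxDegree V G _ (Classical.decRel _)

/-- degree of a vertex, instance-free. -/
noncomputable def deg (G : SimpleGraph V) (v : V) : ℕ :=
  (G.neighborSet v).ncard

/-- A signed graph is balanced if every cycle has sign product `1`. -/
def Balanced (H : SimpleGraph V) (σ : Sym2 V → ℤ) : Prop :=
  ∀ (u : V) (w : H.Walk u u), w.IsCycle → (w.edges.map σ).prod = 1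

/-- A set of edges of `G` forming a matching. -/
def IsMatchingSet (G : SimpleGraph V) (M : Set (Sym2 V)) : Prop :=
  M ⊆ G.edgeSet ∧ ∀ e ∈ M, ∀ e' ∈ M, ∀ v : V, v ∈ e → v ∈ e' → e = e'

/-- `H` is a path graph: some path walk carries all of its edges. -/
def IsPathGraph (H : SimpleGraph V) : Prop :=
  ∃ (u v : V) (p : H.Walk u v), p.IsPath ∧ ∀ e, e ∈ H.edgeSet ↔ e ∈ p.edges

/-- Class `1^±`. -/
def Class1pm [Fintype V] (G : SimpleGraph V) : Prop :=
  ∀ σ : Sym2 V → ℤ, IsSignature G σ → chromIndex G σ = maxDeg G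

/-- Class `2^±`. -/
def Class2pm [Fintype V] (G : SimpleGraph V) : Prop :=
  ∀ σ : Sym2 V → ℤ, IsSignature G σ → chromIndex G σ = maxDeg G + 1

end Signed

open Signed SimpleGraph



namespace NecklaceAux

variable {V : Type*} {G : SimpleGraph V}

/-- The color set as a `Finset`. -/
noncomputable def MsetX (n : ℕ) : Finset ℤ :=
  if Even n then (Finset.Icc (-(n/2 : ℕ) : ℤ) ((n/2 : ℕ) : ℤ)).erase 0
  else Finset.Icc (-(n/2 : ℕ) : ℤ) ((n/2 : ℕ) : ℤ)

lemma mem_MsetX {n : ℕ} {m : ℤ} : m ∈ MsetX n ↔ m ∈ Signed.colorSet n := by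
  have habs : (m.natAbs ≤ n / 2) ↔ (-(n/2 : ℕ) : ℤ) ≤ m ∧ m ≤ ((n/2 : ℕ) : ℤ) := by
    rw [← abs_le, Int.abs_eq_natAbs]
    exact_mod_cast Iff.rfl
  have hdiv : 2 * m.natAbs ≤ n ↔ m.natAbs ≤ n / 2 := by
    rw [Nat.le_div_iff_mul_le (by norm_num), Nat.mul_comm]
  unfold MsetX Signed.colorSet
  by_cases h : Even n
  · simp only [if_pos h, Finset.mem_erase, Finset.mem_Icc, Set.mem_setOf_eq]
    constructor
    · rintro ⟨h0, h1, h2⟩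
      exact ⟨hdiv.mpr (habs.mpr ⟨h1, h2⟩), fun _ => h0⟩
    · rintro ⟨h1, h2⟩
      have := habs.mp (hdiv.mp h1)
      exact ⟨h2 h, this.1, this.2⟩
  · simp only [if_neg h, Finset.mem_Icc, Set.mem_setOf_eq]
    constructor
    · rintro ⟨h1, h2⟩
      exact ⟨hdiv.mpr (habs.mpr ⟨h1, h2⟩), fun he => absurd he h⟩
    · rintro ⟨h1, _⟩
      exact habs.mp (hdiv.mp h1)

lemma card_MsetX {n : ℕ} : (MsetX n).card = n := by
  unfold MsetX
  obtain ⟨K, hK⟩ : ∃ K : ℕ, n / 2 = K := ⟨n / 2, rfl⟩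
  rw [hK]
  have hIcc : (Finset.Icc (-(K : ℤ)) (K : ℤ)).card = 2 * K + 1 := by
    rw [Int.card_Icc]
    omega
  by_cases h : Even n
  · rw [if_pos h, Finset.card_erase_of_mem, hIcc]
    · obtain ⟨t, ht⟩ := h
      omega
    · simp [Finset.mem_Icc]
  · have h' : n % 2 = 1 := Nat.odd_iff.mp (Nat.not_even_iff_odd.mp h)
    rw [if_neg h, hIcc]
    omega

lemma neg_mem_MsetX {n : ℕ} {m : ℤ} (hm : m ∈ MsetX n) : -m ∈ MsetX n := by
  rw [mem_MsetX] at *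
  obtain ⟨h1, h2⟩ := hm
  exact ⟨by simpa using h1, fun he => by simpa using h2 he⟩

lemma smul_mem_MsetX {n : ℕ} {s m : ℤ} (hs : s = 1 ∨ s = -1) (hm : m ∈ MsetX n) :
    s * m ∈ MsetX n := by
  rcases hs with h | h <;> subst h
  · simpa using hm
  · simpa using neg_mem_MsetX hm

lemma exists_avoidS {S : Finset ℤ} (hS : 3 ≤ S.card) (t1 t2 : ℤ) :
    ∃ c ∈ S, c ≠ t1 ∧ c ≠ t2 := by
  classical
  have h : 0 < ((S.erase t1).erase t2).card := by
    have h1 : S.card - 1 ≤ (S.erase t1).card := Finset.pred_card_le_card_erase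
    have h2 : (S.erase t1).card - 1 ≤ ((S.erase t1).erase t2).card :=
      Finset.pred_card_le_card_erase
    omega
  obtain ⟨c, hc⟩ := Finset.card_pos.mp h
  rw [Finset.mem_erase, Finset.mem_erase] at hc
  exact ⟨c, hc.2.2, hc.2.1, hc.1⟩

lemma mem_support_of_mem_edge {x y : V} {w : G.Walk x y} {e : Sym2 V} {p : V}
    (he : e ∈ w.edges) (hp : p ∈ e) : p ∈ w.support := by
  induction e with
  | _ a b =>
    rcases Sym2.mem_iff.mp hp with h | h
    · subst h; exact w.fst_mem_support_of_mem_edges he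
    · subst h; exact w.snd_mem_support_of_mem_edges he

lemma sign_list_prod (σ : Sym2 V → ℤ) :
    ∀ L : List (Sym2 V), (∀ e ∈ L, σ e = 1 ∨ σ e = -1) →
      (L.map σ).prod = 1 ∨ (L.map σ).prod = -1 := by
  intro L
  induction L with
  | nil => intro _; left; simp
  | cons e L ih =>
    intro h
    have he := h e List.mem_cons_self
    have hL := ih (fun e' he' => h e' (List.mem_cons_of_mem e he'))
    rw [List.map_cons, List.prod_cons]
    rcases he with h1 | h1 <;> rcases hL with h2 | h2 <;> rw [h1, h2] <;> simp

lemma neg_one_pow_pm (n : ℕ) : ((-1 : ℤ))^n = 1 ∨ ((-1 : ℤ))^n = -1 := by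
  rcases Nat.even_or_odd n with h | h
  · left; exact h.neg_one_pow
  · right; exact h.neg_one_pow

/-- The compatibility condition on endpoint colors `a`, `b` for a path. -/
def Cond (σ : Sym2 V → ℤ) {x y : V} (w : G.Walk x y) (a b : ℤ) : Prop :=
  (∀ e, w.edges = [e] → b = -σ e * a) ∧
  (∀ e1 e2, w.edges = [e1, e2] → σ e2 * b ≠ σ e1 * a)

lemma walk_coloring (σ : Sym2 V → ℤ)
    (hσ : ∀ e ∈ G.edgeSet, σ e = 1 ∨ σ e = -1)
    (S : Finset ℤ) (hS3 : 3 ≤ S.card)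
    (hneg : ∀ x ∈ S, -x ∈ S)
    {u v : V} (w : G.Walk u v) (b : ℤ) (hb : b ∈ S) (a : ℤ)
    (hw : w.IsPath) (hnil : ¬ w.Nil) (ha : a ∈ S)
    (hab : Cond σ w a b) :
    ∃ g : V → Sym2 V → ℤ,
      (∀ (p : V) (e : Sym2 V), e ∈ w.edges → p ∈ e → g p e ∈ S) ∧
      (∀ p q : V, s(p,q) ∈ w.edges → g p s(p,q) = -σ s(p,q) * g q s(p,q)) ∧
      (∀ (p : V) (e e' : Sym2 V), e ∈ w.edges → e' ∈ w.edges → p ∈ e → p ∈ e' →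
        e ≠ e' → g p e ≠ g p e') ∧
      (∀ e ∈ w.edges, u ∈ e → g u e = a) ∧
      (∀ e ∈ w.edges, v ∈ e → g v e = b) := by
  classical
  revert hw hnil ha hab
  induction w generalizing a with
  | nil =>
    intro _ hnil _ _
    exact absurd SimpleGraph.Walk.nil_nil hnil
  | @cons u y vv h w' ih =>
    intro hw hnil ha hab
    have hσ1 : σ s(u,y) = 1 ∨ σ s(u,y) = -1 := hσ _ (G.mem_edgeSet.mpr h)
    cases w' with
    | nil =>
      -- single edge u-y  (here the walk end vv has become y)
      have hE : b = -σ s(u,y) * a := hab.1 s(u,y) (by simp)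
      refine ⟨fun p _ => if p = u then a else b, ?_, ?_, ?_, ?_, ?_⟩
      · intro p e _ _
        by_cases hp' : p = u <;> simp [hp', ha, hb]
      · intro p q hpq
        simp only [SimpleGraph.Walk.edges_cons, SimpleGraph.Walk.edges_nil,
          List.mem_singleton] at hpq
        dsimp only
        rcases Sym2.eq_iff.mp hpq with ⟨hp, hq⟩ | ⟨hp, hq⟩
        · subst hp; subst hq
          rw [if_pos rfl, if_neg h.ne', hpq, hE]
          rcases hσ1 with h1 | h1 <;> rw [h1] <;> ring
        · subst hp; subst hq
          rw [if_neg h.ne', if_pos rfl, hpq, hE]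
      · intro p e e' he he' _ _ hne
        simp only [SimpleGraph.Walk.edges_cons, SimpleGraph.Walk.edges_nil,
          List.mem_singleton] at he he'
        exact absurd (he.trans he'.symm) hne
      · intro e _ _; dsimp only; rw [if_pos rfl]
      · intro e _ _; dsimp only; rw [if_neg h.ne']
    | @cons _ z _ h' w'' =>
      set w' : G.Walk y vv := SimpleGraph.Walk.cons h' w'' with hw'def
      have hw' : w'.IsPath := hw.of_cons
      have hu_not : u ∉ w'.support := ((SimpleGraph.Walk.cons_isPath_iff h w').mp hw).2
      have hσ2 : σ s(y,z) = 1 ∨ σ s(y,z) = -1 := hσ _ (G.mem_edgeSet.mpr h')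
      have hwe : (SimpleGraph.Walk.cons h w').edges = s(u,y) :: w'.edges := by
        simp
      have hw'e : w'.edges = s(y,z) :: w''.edges := by
        rw [hw'def]; simp
      have hsn : s(u,y) ∉ w'.edges := fun hmem =>
        hu_not (mem_support_of_mem_edge hmem (Sym2.mem_mk_left u y))
      have hyv : y ≠ vv := by
        intro hyv
        have hy2 : y ∉ w''.support := ((SimpleGraph.Walk.cons_isPath_iff h' w'').mp hw').2
        exact hy2 (hyv ▸ w''.end_mem_support)
      have huv : u ≠ vv := fun huv => hu_not (huv ▸ w'.end_mem_support)
      have hc : ∃ c, c ∈ S ∧ c ≠ -σ s(u,y) * a ∧ Cond σ w' c b := by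
        rcases hE2 : w''.edges with _ | ⟨e2, rest⟩
        · refine ⟨-σ s(y,z) * b, ?_, ?_, ?_, ?_⟩
          · rcases hσ2 with h2 | h2 <;> rw [h2]
            · simpa using hneg b hb
            · simpa using hb
          · intro hceq
            have h2 : σ s(y,z) * b = σ s(u,y) * a := by linarith [hceq]
            exact hab.2 s(u,y) s(y,z) (by rw [hwe, hw'e, hE2]) h2
          · intro e he
            rw [hw'e, hE2] at he
            injection he with he1 _
            rw [← he1]
            rcases hσ2 with h2 | h2 <;> rw [h2] <;> ring
          · intro e1' e2' he
            rw [hw'e, hE2] at he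
            simp at he
        · rcases rest with _ | ⟨e3, rest'⟩
          · obtain ⟨c, hcS, hc1, hc2⟩ :=
              exists_avoidS hS3 (-σ s(u,y) * a) (σ s(y,z) * (σ e2 * b))
            refine ⟨c, hcS, hc1, ?_, ?_⟩
            · intro e he
              rw [hw'e, hE2] at he
              simp at he
            · intro e1' e2' he
              rw [hw'e, hE2] at he
              injection he with he1 he'
              injection he' with he2 _
              rw [← he1, ← he2]
              intro heq
              apply hc2
              rcases hσ2 with h2 | h2 <;> rw [h2] at heq ⊢ <;> linarith
          · obtain ⟨c, hcS, hc1, _⟩ := exists_avoidS hS3 (-σ s(u,y) * a) 0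
            refine ⟨c, hcS, hc1, ?_, ?_⟩
            · intro e he
              rw [hw'e, hE2] at he
              simp at he
            · intro e1' e2' he
              rw [hw'e, hE2] at he
              simp at he
      obtain ⟨c, hcS, hct1, hcCond⟩ := hc
      obtain ⟨g', hg1, hg2, hg3, hg4, hg5⟩ :=
        ih c hw' SimpleGraph.Walk.not_nil_cons hcS hcCond
      refine ⟨fun p e => if e = s(u,y) then (if p = u then a else -σ s(u,y) * a)
        else g' p e, ?_, ?_, ?_, ?_, ?_⟩
      · intro p e he hp
        rw [hwe, List.mem_cons] at he
        dsimp only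
        rcases he with he | he
        · rw [if_pos he]
          by_cases hpu : p = u
          · rw [if_pos hpu]; exact ha
          · rw [if_neg hpu]
            rcases hσ1 with h1 | h1 <;> rw [h1]
            · simpa using hneg a ha
            · simpa using ha
        · have hne1 : e ≠ s(u,y) := fun hEq => hsn (hEq ▸ he)
          rw [if_neg hne1]
          exact hg1 p e he hp
      · intro p q hpq
        rw [hwe, List.mem_cons] at hpq
        dsimp only
        rcases hpq with hpq | hpq
        · rw [hpq, if_pos rfl, if_pos rfl]
          rcases Sym2.eq_iff.mp hpq with ⟨hp, hq⟩ | ⟨hp, hq⟩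
          · subst hp; subst hq
            rw [if_pos rfl, if_neg h.ne']
            rcases hσ1 with h1 | h1 <;> rw [h1] <;> ring
          · subst hp; subst hq
            rw [if_neg h.ne', if_pos rfl]
        · have hne1 : s(p,q) ≠ s(u,y) := fun hEq => hsn (hEq ▸ hpq)
          rw [if_neg hne1, if_neg hne1]
          exact hg2 p q hpq
      · intro p e e' he he' hpe hpe' hne
        rw [hwe, List.mem_cons] at he he'
        dsimp only
        rcases he with he | he <;> rcases he' with he' | he'
        · exact absurd (he.trans he'.symm) hne
        · have hne2 : e' ≠ s(u,y) := fun hEq => hsn (hEq ▸ he')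
          rw [if_pos he, if_neg hne2]
          rw [he] at hpe
          rcases Sym2.mem_iff.mp hpe with hp | hp
          · subst hp
            exact absurd (mem_support_of_mem_edge he' hpe') hu_not
          · subst hp
            rw [if_neg h.ne']
            rw [hg4 e' he' hpe']
            exact fun hEq => hct1 hEq.symm
        · have hne2 : e ≠ s(u,y) := fun hEq => hsn (hEq ▸ he)
          rw [if_pos he', if_neg hne2]
          rw [he'] at hpe'
          rcases Sym2.mem_iff.mp hpe' with hp | hp
          · subst hp
            exact absurd (mem_support_of_mem_edge he hpe) hu_not
          · subst hp
            rw [if_neg h.ne']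
            rw [hg4 e he hpe]
            exact fun hEq => hct1 hEq
        · have hne2 : e ≠ s(u,y) := fun hEq => hsn (hEq ▸ he)
          have hne3 : e' ≠ s(u,y) := fun hEq => hsn (hEq ▸ he')
          rw [if_neg hne2, if_neg hne3]
          exact hg3 p e e' he he' hpe hpe' hne
      · intro e he hu
        rw [hwe, List.mem_cons] at he
        dsimp only
        rcases he with he | he
        · rw [if_pos he, if_pos rfl]
        · exact absurd (mem_support_of_mem_edge he hu) hu_not
      · intro e he hv
        rw [hwe, List.mem_cons] at he
        dsimp only
        rcases he with he | he
        · exfalso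
          rw [he] at hv
          rcases Sym2.mem_iff.mp hv with hp | hp
          · exact huv hp.symm
          · exact hyv hp.symm
        · have hne2 : e ≠ s(u,y) := fun hEq => hsn (hEq ▸ he)
          rw [if_neg hne2]
          exact hg5 e he hv

lemma not_nil_of_ne {x y : V} (hxy : x ≠ y) (w : G.Walk x y) : ¬ w.Nil := by
  cases w with
  | nil => exact absurd rfl hxy
  | cons h p => exact SimpleGraph.Walk.not_nil_cons

lemma eq_of_edges_nil {x y : V} {w : G.Walk x y} (h : w.edges = []) : x = y := by
  cases w with
  | nil => rfl
  | cons h' p => simp at h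

lemma first_edge_mem {x y : V} {w : G.Walk x y} (hnil : ¬ w.Nil) :
    s(x, w.getVert 1) ∈ w.edges := by
  cases w with
  | nil => exact absurd SimpleGraph.Walk.nil_nil hnil
  | cons h p =>
    have h1 : (SimpleGraph.Walk.cons h p).getVert 1 = p.getVert 0 := by
      rw [show (1 : ℕ) = 0 + 1 from rfl]
      exact SimpleGraph.Walk.getVert_cons_succ p h
    rw [SimpleGraph.Walk.edges_cons, h1, SimpleGraph.Walk.getVert_zero]
    exact List.mem_cons_self

lemma edge_start {x y : V} {w : G.Walk x y} (hw : w.IsPath) {e : Sym2 V}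
    (he : e ∈ w.edges) (hx : x ∈ e) : e = s(x, w.getVert 1) := by
  cases w with
  | nil => simp at he
  | cons h p =>
    rw [SimpleGraph.Walk.edges_cons, List.mem_cons] at he
    rcases he with he | he
    · have h1 : (SimpleGraph.Walk.cons h p).getVert 1 = p.getVert 0 := by
        rw [show (1 : ℕ) = 0 + 1 from rfl]
        exact SimpleGraph.Walk.getVert_cons_succ p h
      rw [he, h1, SimpleGraph.Walk.getVert_zero]
    · exfalso
      exact ((SimpleGraph.Walk.cons_isPath_iff h p).mp hw).2
        (mem_support_of_mem_edge he hx)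

lemma single_edge_eq {x y : V} {w : G.Walk x y} {e : Sym2 V}
    (he : w.edges = [e]) : e = s(x, y) := by
  cases w with
  | nil => simp at he
  | cons h p =>
    rw [SimpleGraph.Walk.edges_cons] at he
    injection he with h1 h2
    have : x = y → True := fun _ => trivial
    have hy := eq_of_edges_nil h2
    rw [← h1, hy]

lemma path_not_three_edges {x y : V} {w : G.Walk x y} (hw : w.IsPath)
    {p : V} {e1 e2 e3 : Sym2 V}
    (hp1 : p ∈ e1) (hp2 : p ∈ e2) (hp3 : p ∈ e3)
    (d12 : e1 ≠ e2) (d13 : e1 ≠ e3) (d23 : e2 ≠ e3)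
    (h1 : e1 ∈ w.edges) (h2 : e2 ∈ w.edges) (h3 : e3 ∈ w.edges) : False := by
  revert hw h1 h2 h3
  induction w with
  | nil =>
    intro _ h1 _ _
    simp at h1
  | @cons x z yy h q ih =>
    intro hw h1 h2 h3
    have hq : q.IsPath := hw.of_cons
    have hx : x ∉ q.support := ((SimpleGraph.Walk.cons_isPath_iff h q).mp hw).2
    have key : ∀ (ea eb : Sym2 V), ea ∈ q.edges → eb ∈ q.edges → ea ≠ eb →
        p ∈ ea → p ∈ eb → p ∈ s(x,z) → False := by
      intro ea eb hea heb hne hpa hpb hpx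
      rcases Sym2.mem_iff.mp hpx with hp | hp
      · subst hp
        exact hx (mem_support_of_mem_edge hea hpa)
      · subst hp
        have h1' := edge_start hq hea hpa
        have h2' := edge_start hq heb hpb
        exact hne (h1'.trans h2'.symm)
    rw [SimpleGraph.Walk.edges_cons, List.mem_cons] at h1 h2 h3
    rcases h1 with h1 | h1 <;> rcases h2 with h2 | h2 <;> rcases h3 with h3 | h3
    · exact d12 (h1.trans h2.symm)
    · exact d12 (h1.trans h2.symm)
    · exact d13 (h1.trans h3.symm)
    · exact key e2 e3 h2 h3 d23 hp2 hp3 (h1 ▸ hp1)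
    · exact d23 (h2.trans h3.symm)
    · exact key e1 e3 h1 h3 d13 hp1 hp3 (h2 ▸ hp2)
    · exact key e1 e2 h1 h2 d12 hp1 hp2 (h3 ▸ hp3)
    · exact ih hq h1 h2 h3

section Degree

variable [Fintype V] {u v : V} {k : ℕ} {P : Fin k → G.Walk u v}

/-- In a necklace, the degree of the common endpoint `u` is `k`. -/
lemma degree_start [DecidableRel G.Adj] (huv : u ≠ v)
    (hP : ∀ i, (P i).IsPath)
    (hE : ∀ i j, i ≠ j → ∀ e, e ∈ (P i).edges → e ∉ (P j).edges)
    (hcov : ∀ e ∈ G.edgeSet, ∃ i, e ∈ (P i).edges) :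
    G.degree u = k := by
  classical
  have hnil : ∀ i, ¬ (P i).Nil := fun i => not_nil_of_ne huv (P i)
  have hinj : Function.Injective (fun i => (P i).getVert 1) := by
    intro i j hij
    by_contra hne
    dsimp at hij
    have hmi : s(u, (P i).getVert 1) ∈ (P i).edges := first_edge_mem (hnil i)
    have hmj : s(u, (P j).getVert 1) ∈ (P j).edges := first_edge_mem (hnil j)
    rw [← hij] at hmj
    exact hE i j hne _ hmi hmj
  have himg : G.neighborFinset u = Finset.image (fun i => (P i).getVert 1) Finset.univ := by
    ext x
    rw [SimpleGraph.mem_neighborFinset, Finset.mem_image]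
    constructor
    · intro hadj
      obtain ⟨i, hi⟩ := hcov s(u,x) (G.mem_edgeSet.mpr hadj)
      refine ⟨i, Finset.mem_univ i, ?_⟩
      have := edge_start (hP i) hi (Sym2.mem_mk_left u x)
      rcases Sym2.eq_iff.mp this with ⟨_, hx2⟩ | ⟨hg, hx2⟩
      · exact hx2.symm
      · exact absurd hx2.symm (G.ne_of_adj hadj)
    · rintro ⟨i, _, hx⟩
      subst hx
      exact SimpleGraph.Walk.adj_snd (hnil i)
  have hdeg : G.degree u = (Finset.image (fun i => (P i).getVert 1) Finset.univ).card := by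
    rw [← himg]
    rfl
  rw [Finset.card_image_of_injective _ hinj, Finset.card_univ, Fintype.card_fin] at hdeg
  exact hdeg

/-- In a necklace, internal vertices have degree at most 2. -/
lemma degree_mid [DecidableRel G.Adj] (huv : u ≠ v)
    (hP : ∀ i, (P i).IsPath)
    (hI : ∀ i j, i ≠ j → ∀ w : V, w ∈ (P i).support → w ∈ (P j).support → w = u ∨ w = v)
    (hcov : ∀ e ∈ G.edgeSet, ∃ i, e ∈ (P i).edges)
    {p : V} (hpu : p ≠ u) (hpv : p ≠ v) :
    G.degree p ≤ 2 := by
  classical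
  by_contra hdeg
  push_neg at hdeg
  have hdeg' : 2 < (G.neighborFinset p).card := hdeg
  obtain ⟨x1, x2, x3, hx1, hx2, hx3, h12, h13, h23⟩ := Finset.two_lt_card_iff.mp hdeg'
  rw [SimpleGraph.mem_neighborFinset] at hx1 hx2 hx3
  obtain ⟨i1, hi1⟩ := hcov s(p,x1) (G.mem_edgeSet.mpr hx1)
  obtain ⟨i2, hi2⟩ := hcov s(p,x2) (G.mem_edgeSet.mpr hx2)
  obtain ⟨i3, hi3⟩ := hcov s(p,x3) (G.mem_edgeSet.mpr hx3)
  have hsame : ∀ (ia ib : Fin k), ia ≠ ib → p ∈ (P ia).support → p ∈ (P ib).support → False := by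
    intro ia ib hne ha hb
    rcases hI ia ib hne p ha hb with h | h
    · exact hpu h
    · exact hpv h
  have hmem : ∀ (i : Fin k) (x : V), s(p,x) ∈ (P i).edges → p ∈ (P i).support :=
    fun i x hi => mem_support_of_mem_edge hi (Sym2.mem_mk_left p x)
  have e12 : i1 = i2 := by
    by_contra hne
    exact hsame i1 i2 hne (hmem i1 x1 hi1) (hmem i2 x2 hi2)
  have e13 : i1 = i3 := by
    by_contra hne
    exact hsame i1 i3 hne (hmem i1 x1 hi1) (hmem i3 x3 hi3)
  subst e12
  subst e13
  have hedist : ∀ (xa xb : V), G.Adj p xa → xa ≠ xb → s(p,xa) ≠ s(p,xb) := by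
    intro xa xb hadj hne hEq
    rcases Sym2.eq_iff.mp hEq with ⟨_, h2⟩ | ⟨h1', h2'⟩
    · exact hne h2
    · exact (G.ne_of_adj hadj) h2'.symm
  exact path_not_three_edges (hP i1) (Sym2.mem_mk_left p x1) (Sym2.mem_mk_left p x2)
    (Sym2.mem_mk_left p x3) (hedist x1 x2 hx1 h12) (hedist x1 x3 hx1 h13)
    (hedist x2 x3 hx2 h23) hi1 hi2 hi3

end Degree

end NecklaceAux

/-- Every necklace with at least `3` paths is of class `1^±`. A necklace decomposes into
internally disjoint paths sharing the same two endpoints. -/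
theorem necklace_class1 {V : Type*} [Fintype V] (G : SimpleGraph V)
    (hneck : ∃ (u v : V) (k : ℕ), 3 ≤ k ∧ u ≠ v ∧
      ∃ P : Fin k → G.Walk u v,
        (∀ i, (P i).IsPath) ∧
        (∀ i j, i ≠ j → ∀ w : V, w ∈ (P i).support → w ∈ (P j).support → w = u ∨ w = v) ∧
        (∀ i j, i ≠ j → ∀ e, e ∈ (P i).edges → e ∉ (P j).edges) ∧
        (∀ e ∈ G.edgeSet, ∃ i, e ∈ (P i).edges)) :
    Class1pm G := by
  classical
  intro σ hsig
  obtain ⟨u, v, k, hk3, huv, P, hP, hI, hE, hcov⟩ := hneck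
  letI inst : DecidableRel G.Adj := Classical.decRel _
  have hσ : ∀ e ∈ G.edgeSet, σ e = 1 ∨ σ e = -1 := hsig
  have hnil : ∀ i, ¬ (P i).Nil := fun i => NecklaceAux.not_nil_of_ne huv (P i)
  set S : Finset ℤ := NecklaceAux.MsetX k with hSdef
  have hcardS : S.card = k := by rw [hSdef]; exact NecklaceAux.card_MsetX
  have hS3 : 3 ≤ S.card := by rw [hcardS]; exact hk3
  have hneg : ∀ x ∈ S, -x ∈ S := by
    intro x hx
    rw [hSdef] at hx ⊢
    exact NecklaceAux.neg_mem_MsetX hx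
  have hsmul : ∀ s m : ℤ, (s = 1 ∨ s = -1) → m ∈ S → s * m ∈ S := by
    intro s m hs hm
    rw [hSdef] at hm ⊢
    exact NecklaceAux.smul_mem_MsetX hs hm
  have hmemiff : ∀ m : ℤ, m ∈ S ↔ m ∈ Signed.colorSet k := by
    intro m
    rw [hSdef]
    exact NecklaceAux.mem_MsetX
  have huniq : ∀ i j : Fin k, (P i).edges.length = 1 → (P j).edges.length = 1 → i = j := by
    intro i j hi hj
    by_contra hne
    obtain ⟨ei, hei⟩ := List.length_eq_one_iff.mp hi
    obtain ⟨ej, hej⟩ := List.length_eq_one_iff.mp hj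
    have h1 : ei = s(u,v) := NecklaceAux.single_edge_eq hei
    have h2 : ej = s(u,v) := NecklaceAux.single_edge_eq hej
    apply hE i j hne ei (by rw [hei]; exact List.mem_singleton_self _)
    rw [hej, h1, ← h2]
    exact List.mem_singleton_self _
  set ε : Fin k → ℤ := fun i => (-1 : ℤ)^((P i).edges.length) * ((P i).edges.map σ).prod
    with hεdef
  have hεpm : ∀ i, ε i = 1 ∨ ε i = -1 := by
    intro i
    have h1 := NecklaceAux.neg_one_pow_pm ((P i).edges.length)
    have h2 := NecklaceAux.sign_list_prod σ (P i).edges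
      (fun e he => hσ e (SimpleGraph.Walk.edges_subset_edgeSet _ he))
    rw [hεdef]
    dsimp only
    rcases h1 with h | h <;> rcases h2 with h' | h' <;> rw [h, h'] <;> norm_num
  have hm12 : ∃ m1 m2 : ℤ, m1 ∈ S ∧ m2 ∈ S ∧ m1.natAbs ≠ m2.natAbs := by
    rw [hSdef]
    by_cases hk : Even k
    · have hk4 : 4 ≤ k := by obtain ⟨t, ht⟩ := hk; omega
      refine ⟨1, 2, ?_, ?_, by norm_num⟩
      · rw [NecklaceAux.mem_MsetX]
        exact ⟨by simp; omega, fun _ => one_ne_zero⟩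
      · rw [NecklaceAux.mem_MsetX]
        exact ⟨by simp; omega, fun _ => two_ne_zero⟩
    · refine ⟨0, 1, ?_, ?_, by norm_num⟩
      · rw [NecklaceAux.mem_MsetX]
        exact ⟨by simp, fun he => absurd he hk⟩
      · rw [NecklaceAux.mem_MsetX]
        exact ⟨by simp; omega, fun _ => one_ne_zero⟩
  have hA : ∃ a : Fin k → ℤ, Function.Injective a ∧ (∀ i, a i ∈ S) ∧
      ((∃ i j : Fin k, i ≠ j ∧ (P i).edges.length = 2 ∧ (P j).edges.length = 2) →
        ∃ i j : Fin k, i ≠ j ∧ (P i).edges.length = 2 ∧ (P j).edges.length = 2 ∧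
          (a i).natAbs ≠ (a j).natAbs) := by
    have hA0 : Fin k ≃ {x // x ∈ S} := (Finset.equivFinOfCardEq hcardS).symm
    by_cases h2 : ∃ i j : Fin k, i ≠ j ∧ (P i).edges.length = 2 ∧ (P j).edges.length = 2
    · obtain ⟨i0, j0, hij, hL2i, hL2j⟩ := h2
      obtain ⟨m1, m2, hm1, hm2, hmabs⟩ := hm12
      have hm12ne : m1 ≠ m2 := fun h => hmabs (by rw [h])
      set M1 : {x // x ∈ S} := ⟨m1, hm1⟩ with hM1def
      set M2 : {x // x ∈ S} := ⟨m2, hm2⟩ with hM2def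
      have hM12 : M1 ≠ M2 := fun h => hm12ne (congrArg Subtype.val h)
      set A1 : Fin k ≃ {x // x ∈ S} := (Equiv.swap i0 (hA0.symm M1)).trans hA0 with hA1
      have hA1i0 : A1 i0 = M1 := by
        rw [hA1]
        simp [Equiv.swap_apply_left]
      set A2 : Fin k ≃ {x // x ∈ S} := (Equiv.swap j0 (A1.symm M2)).trans A1 with hA2
      have hA2j0 : A2 j0 = M2 := by
        rw [hA2]
        simp
      have hA2i0 : A2 i0 = M1 := by
        rw [hA2]
        simp only [Equiv.trans_apply]
        rw [Equiv.swap_apply_of_ne_of_ne hij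
          (fun hEq => hM12 (by rw [← hA1i0, hEq, Equiv.apply_symm_apply])), hA1i0]
      refine ⟨fun i => (A2 i : ℤ), ?_, fun i => (A2 i).2, fun _ => ⟨i0, j0, hij, hL2i, hL2j, ?_⟩⟩
      · intro x y hxy
        exact A2.injective (Subtype.ext hxy)
      · dsimp only
        rw [hA2i0, hA2j0]
        exact hmabs
    · exact ⟨fun i => (hA0 i : ℤ), fun x y hxy => hA0.injective (Subtype.ext hxy),
        fun i => (hA0 i).2, fun h => absurd h h2⟩
  obtain ⟨a, hainj, haS, haprop⟩ := hA
  set t : Fin k → Finset ℤ := fun i =>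
    if (P i).edges.length = 1 then {ε i * a i}
    else if (P i).edges.length = 2 then S.erase (ε i * a i) else S with htdef
  have ht1 : ∀ i, (P i).edges.length = 1 → t i = {ε i * a i} := by
    intro i h
    rw [htdef]
    simp [h]
  have ht2 : ∀ i, (P i).edges.length = 2 → t i = S.erase (ε i * a i) := by
    intro i h
    rw [htdef]
    simp [h]
  have ht3 : ∀ i, (P i).edges.length ≠ 1 → (P i).edges.length ≠ 2 → t i = S := by
    intro i h1 h2
    rw [htdef]
    dsimp only
    rw [if_neg h1, if_neg h2]
  have htne : ∀ i, (t i).Nonempty := by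
    intro i
    by_cases h1 : (P i).edges.length = 1
    · rw [ht1 i h1]
      exact ⟨_, Finset.mem_singleton_self _⟩
    by_cases h2 : (P i).edges.length = 2
    · rw [ht2 i h2]
      apply Finset.card_pos.mp
      have := Finset.pred_card_le_card_erase (s := S) (a := ε i * a i)
      omega
    · rw [ht3 i h1 h2]
      apply Finset.card_pos.mp
      omega
  have hHall : ∀ s : Finset (Fin k), s.card ≤ (s.biUnion t).card := by
    intro s
    rcases Finset.eq_empty_or_nonempty s with rfl | ⟨i_s, his⟩
    · simp
    by_cases hfree : ∃ i ∈ s, (P i).edges.length ≠ 1 ∧ (P i).edges.length ≠ 2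
    · obtain ⟨i, his', h1, h2⟩ := hfree
      have hsub : S ⊆ s.biUnion t := by
        rw [← ht3 i h1 h2]
        exact Finset.subset_biUnion_of_mem t his'
      have h3 := Finset.card_le_card hsub
      have h4 : s.card ≤ k := by
        have := Finset.card_le_univ s
        simpa using this
      omega
    · push_neg at hfree
      by_cases hall1 : ∀ i ∈ s, (P i).edges.length = 1
      · have hcard1 : s.card ≤ 1 :=
          Finset.card_le_one.mpr (fun i hi j hj => huniq i j (hall1 i hi) (hall1 j hj))
        obtain ⟨x, hx⟩ := htne i_s
        have h5 : 0 < (s.biUnion t).card :=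
          Finset.card_pos.mpr ⟨x, Finset.mem_biUnion.mpr ⟨i_s, his, hx⟩⟩
        omega
      · push_neg at hall1
        obtain ⟨j0, hj0s, hj0ne⟩ := hall1
        have hj0L2 : (P j0).edges.length = 2 := hfree j0 hj0s hj0ne
        by_cases hcard : s.card ≤ k - 1
        · have hsub : S.erase (ε j0 * a j0) ⊆ s.biUnion t := by
            rw [← ht2 j0 hj0L2]
            exact Finset.subset_biUnion_of_mem t hj0s
          have h3 := Finset.card_le_card hsub
          have h4 := Finset.pred_card_le_card_erase (s := S) (a := ε j0 * a j0)
          omega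
        · have h4 : s.card ≤ k := by
            have := Finset.card_le_univ s
            simpa using this
          have hsk : s.card = k := by omega
          have hsuniv : s = Finset.univ :=
            Finset.eq_univ_of_card s (by rw [Fintype.card_fin]; exact hsk)
          have hmem : ∀ i : Fin k, i ∈ s := fun i => hsuniv ▸ Finset.mem_univ i
          have hTwo : ∃ i j : Fin k, i ≠ j ∧ (P i).edges.length = 2 ∧
              (P j).edges.length = 2 := by
            have hL12 : ∀ i : Fin k, (P i).edges.length = 1 ∨ (P i).edges.length = 2 := by
              intro i
              by_cases h1 : (P i).edges.length = 1
              · exact Or.inl h1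
              · exact Or.inr (hfree i (hmem i) h1)
            have hi0 : (0 : ℕ) < k := by omega
            have hi1 : (1 : ℕ) < k := by omega
            have hi2 : (2 : ℕ) < k := by omega
            set x0 : Fin k := ⟨0, hi0⟩ with hx0
            set x1 : Fin k := ⟨1, hi1⟩ with hx1
            set x2 : Fin k := ⟨2, hi2⟩ with hx2
            have h01 : x0 ≠ x1 := by rw [hx0, hx1]; simp
            have h02 : x0 ≠ x2 := by rw [hx0, hx2]; simp
            have h12 : x1 ≠ x2 := by rw [hx1, hx2]; simp
            by_cases c0 : (P x0).edges.length = 1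
            · by_cases c1 : (P x1).edges.length = 1
              · exact absurd (huniq x0 x1 c0 c1) h01
              · by_cases c2 : (P x2).edges.length = 1
                · exact absurd (huniq x0 x2 c0 c2) h02
                · exact ⟨x1, x2, h12, (hL12 x1).resolve_left c1, (hL12 x2).resolve_left c2⟩
            · by_cases c1 : (P x1).edges.length = 1
              · by_cases c2 : (P x2).edges.length = 1
                · exact absurd (huniq x1 x2 c1 c2) h12
                · exact ⟨x0, x2, h02, (hL12 x0).resolve_left c0, (hL12 x2).resolve_left c2⟩
              · exact ⟨x0, x1, h01, (hL12 x0).resolve_left c0, (hL12 x1).resolve_left c1⟩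
          obtain ⟨i, j, hij, hL2i, hL2j, habs⟩ := haprop hTwo
          have hSsub : S ⊆ s.biUnion t := by
            intro x hx
            by_cases hxi : x = ε i * a i
            · have hxj : x ≠ ε j * a j := by
                intro hEq
                apply habs
                have hnat : (ε i * a i).natAbs = (ε j * a j).natAbs := by
                  rw [← hxi, ← hEq]
                rcases hεpm i with h | h <;> rcases hεpm j with h' | h' <;>
                  rw [h, h'] at hnat <;> simpa using hnat
              refine Finset.mem_biUnion.mpr ⟨j, hmem j, ?_⟩
              rw [ht2 j hL2j]
              exact Finset.mem_erase.mpr ⟨hxj, hx⟩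
            · refine Finset.mem_biUnion.mpr ⟨i, hmem i, ?_⟩
              rw [ht2 i hL2i]
              exact Finset.mem_erase.mpr ⟨hxi, hx⟩
          have h5 := Finset.card_le_card hSsub
          omega
  obtain ⟨b, hbinj, hbt⟩ := (Finset.all_card_le_biUnion_card_iff_exists_injective t).mp hHall
  have hbS : ∀ i, b i ∈ S := by
    intro i
    have hb := hbt i
    by_cases h1 : (P i).edges.length = 1
    · rw [ht1 i h1, Finset.mem_singleton] at hb
      rw [hb]
      exact hsmul _ _ (hεpm i) (haS i)
    by_cases h2 : (P i).edges.length = 2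
    · rw [ht2 i h2] at hb
      exact Finset.mem_of_mem_erase hb
    · rw [ht3 i h1 h2] at hb
      exact hb
  have hCond : ∀ i, NecklaceAux.Cond σ (P i) (a i) (b i) := by
    intro i
    constructor
    · intro e hEi
      have hlen : (P i).edges.length = 1 := by rw [hEi]; rfl
      have hb := hbt i
      rw [ht1 i hlen, Finset.mem_singleton] at hb
      have hεi : ε i = -σ e := by
        rw [hεdef]
        dsimp only
        rw [hEi]
        simp
      rw [hb, hεi]
    · intro e1 e2 hEi
      have hlen : (P i).edges.length = 2 := by rw [hEi]; rfl
      have hb := hbt i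
      rw [ht2 i hlen, Finset.mem_erase] at hb
      have hbne := hb.1
      have hεi : ε i = σ e1 * σ e2 := by
        rw [hεdef]
        dsimp only
        rw [hEi]
        norm_num
      have hσ2 : σ e2 = 1 ∨ σ e2 = -1 :=
        hσ e2 (SimpleGraph.Walk.edges_subset_edgeSet _ (by rw [hEi]; simp))
      intro heq
      apply hbne
      rw [hεi]
      rcases hσ2 with h | h <;> rw [h] at heq ⊢ <;> linarith
  have hwc := fun i =>
    NecklaceAux.walk_coloring σ hσ S hS3 hneg (P i) (b i) (hbS i) (a i) (hP i) (hnil i)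
      (haS i) (hCond i)
  choose g hg1 hg2 hg3 hg4 hg5 using hwc
  have hcol : Signed.Colorable G σ k := by
    refine ⟨fun p e => if h : ∃ i, e ∈ (P i).edges then g h.choose p e else 0, ?_, ?_, ?_⟩
    · intro p q hadj
      have hex : ∃ i, s(p,q) ∈ (P i).edges := hcov _ (G.mem_edgeSet.mpr hadj)
      dsimp only
      rw [dif_pos hex]
      exact (hmemiff _).mp
        (hg1 hex.choose p s(p,q) hex.choose_spec (Sym2.mem_mk_left p q))
    · intro p q hadj
      have hex : ∃ i, s(p,q) ∈ (P i).edges := hcov _ (G.mem_edgeSet.mpr hadj)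
      dsimp only
      rw [dif_pos hex, dif_pos hex]
      exact hg2 hex.choose p q hex.choose_spec
    · intro p q r hadj1 hadj2 hqr
      have hex1 : ∃ i, s(p,q) ∈ (P i).edges := hcov _ (G.mem_edgeSet.mpr hadj1)
      have hex2 : ∃ i, s(p,r) ∈ (P i).edges := hcov _ (G.mem_edgeSet.mpr hadj2)
      have hee : s(p,q) ≠ s(p,r) := by
        intro hEq
        rcases Sym2.eq_iff.mp hEq with ⟨_, h'⟩ | ⟨h1', h2'⟩
        · exact hqr h'
        · exact hqr (h2'.trans h1')
      dsimp only
      rw [dif_pos hex1, dif_pos hex2]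
      by_cases hij : hex1.choose = hex2.choose
      · rw [← hij]
        exact hg3 hex1.choose p s(p,q) s(p,r) hex1.choose_spec
          (by rw [hij]; exact hex2.choose_spec)
          (Sym2.mem_mk_left p q) (Sym2.mem_mk_left p r) hee
      · have hp1 : p ∈ (P hex1.choose).support :=
          NecklaceAux.mem_support_of_mem_edge hex1.choose_spec (Sym2.mem_mk_left p q)
        have hp2 : p ∈ (P hex2.choose).support :=
          NecklaceAux.mem_support_of_mem_edge hex2.choose_spec (Sym2.mem_mk_left p r)
        rcases hI _ _ hij p hp1 hp2 with hpu | hpv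
        · subst hpu
          rw [hg4 hex1.choose _ hex1.choose_spec (Sym2.mem_mk_left p q),
              hg4 hex2.choose _ hex2.choose_spec (Sym2.mem_mk_left p r)]
          exact fun hEq => hij (hainj hEq)
        · subst hpv
          rw [hg5 hex1.choose _ hex1.choose_spec (Sym2.mem_mk_left p q),
              hg5 hex2.choose _ hex2.choose_spec (Sym2.mem_mk_left p r)]
          exact fun hEq => hij (hbinj hEq)
  have hdegu : G.degree u = k := NecklaceAux.degree_start huv hP hE hcov
  have hdegv : G.degree v = k := by
    have hP' : ∀ i, ((P i).reverse).IsPath := fun i => (hP i).reverse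
    have hE' : ∀ i j, i ≠ j → ∀ e, e ∈ ((P i).reverse).edges → e ∉ ((P j).reverse).edges := by
      intro i j hij e hei hej
      rw [SimpleGraph.Walk.edges_reverse, List.mem_reverse] at hei hej
      exact hE i j hij e hei hej
    have hcov' : ∀ e ∈ G.edgeSet, ∃ i, e ∈ ((P i).reverse).edges := by
      intro e he
      obtain ⟨i, hi⟩ := hcov e he
      exact ⟨i, by rw [SimpleGraph.Walk.edges_reverse, List.mem_reverse]; exact hi⟩
    exact NecklaceAux.degree_start (Ne.symm huv) hP' hE' hcov'
  have hmaxdeg : G.maxDegree = k := by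
    apply le_antisymm
    · apply SimpleGraph.maxDegree_le_of_forall_degree_le
      intro w
      by_cases hwu : w = u
      · rw [hwu, hdegu]
      by_cases hwv : w = v
      · rw [hwv, hdegv]
      · have := NecklaceAux.degree_mid (G := G) huv hP hI hcov hwu hwv
        omega
    · rw [← hdegu]
      exact G.degree_le_maxDegree u
  have hmd : Signed.maxDeg G = k := by
    unfold Signed.maxDeg
    have hinsteq : (Classical.decRel (fun a b => G.Adj a b)) = inst := Subsingleton.elim _ _
    convert hmaxdeg using 2
  have hlow : ∀ n, Signed.Colorable G σ n → k ≤ n := by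
    rintro n ⟨f, hf1, hf2, hf3⟩
    have hmaps : ∀ x ∈ G.neighborFinset u, f u s(u,x) ∈ NecklaceAux.MsetX n := by
      intro x hx
      exact NecklaceAux.mem_MsetX.mpr (hf1 u x ((SimpleGraph.mem_neighborFinset _ _ _).mp hx))
    have hinjOn : Set.InjOn (fun x => f u s(u,x)) (G.neighborFinset u) := by
      intro x hx y hy hxy
      by_contra hne
      exact hf3 u x y ((SimpleGraph.mem_neighborFinset _ _ _).mp hx)
        ((SimpleGraph.mem_neighborFinset _ _ _).mp hy) hne hxy
    have hcard := Finset.card_le_card_of_injOn _ hmaps hinjOn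
    rw [NecklaceAux.card_MsetX] at hcard
    rw [show (G.neighborFinset u).card = G.degree u from rfl, hdegu] at hcard
    exact hcard
  rw [hmd]
  unfold Signed.chromIndex
  have hkmem : k ∈ {n | Signed.Colorable G σ n} := hcol
  exact le_antisymm (Nat.sInf_le hkmem) (hlow _ (Nat.sInf_mem ⟨k, hkmem⟩))
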